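/- Let Y be a complete β-homogeneous F-space with β > 0, X an Abelian group, ε ≥ 0, and f : X → Y satisfying ‖f(2x) - (3/8)f(4x) + (1/8)f(-4x)‖ ≤ ((2^(β+2)+3^(β+1)+3)/8^β)·ε for all x ∈ X. Then for every x ∈ X the sequence g_n(x) = ((2^n+1)/(2·4^n))·f(2^n x) - ((2^n-1)/(2·4^n))·f(-2^n x) is a Cauchy sequence in Y, and hence converges. -/

import Mathlib

theorem stmt4 {X Y : Type*} [AddCommGroup X] [AddCommGroup Y] [Module ℝ Y]
    (β : ℝ) (hβ : 0 < β)
    (N : Y → ℝ)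
    (hN0 : ∀ y : Y, N y = 0 ↔ y = 0)
    (htri : ∀ y z : Y, N (y + z) ≤ N y + N z)
    (hhom : ∀ (t : ℝ) (y : Y), N (t • y) = |t| ^ β * N y)
    (hcomp : ∀ u : ℕ → Y,
      (∀ δ > (0 : ℝ), ∃ M : ℕ, ∀ m n, M ≤ m → M ≤ n → N (u m - u n) < δ) →
      ∃ l : Y, ∀ δ > (0 : ℝ), ∃ M : ℕ, ∀ n, M ≤ n → N (u n - l) < δ)
    (ε : ℝ) (hε : 0 ≤ ε)
    (f : X → Y)
    (hf : ∀ x : X, N (f (2 • x) - (3 / 8 : ℝ) • f (4 • x) + (1 / 8 : ℝ) • f (-(4 • x)))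
      ≤ ((2 : ℝ) ^ (β + 2) + (3 : ℝ) ^ (β + 1) + 3) / (8 : ℝ) ^ β * ε)
    (g : ℕ → X → Y)
    (hg : ∀ (n : ℕ) (x : X), g n x =
      (((2 : ℝ) ^ n + 1) / (2 * (4 : ℝ) ^ n)) • f (2 ^ n • x)
        - (((2 : ℝ) ^ n - 1) / (2 * (4 : ℝ) ^ n)) • f (-(2 ^ n • x))) :
    ∀ x : X,
      (∀ δ > (0 : ℝ), ∃ M : ℕ, ∀ m n, M ≤ m → M ≤ n → N (g m x - g n x) < δ) ∧
      (∃ l : Y, ∀ δ > (0 : ℝ), ∃ M : ℕ, ∀ n, M ≤ n → N (g n x - l) < δ) := by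
  have hN0' : N 0 = 0 := (hN0 0).mpr rfl
  have hNneg : ∀ y, N (-y) = N y := by
    intro y
    have h := hhom (-1) y
    simpa using h
  have hNnonneg : ∀ y, 0 ≤ N y := by
    intro y
    have h := htri y (-y)
    rw [add_neg_cancel, hN0', hNneg] at h
    linarith
  intro x
  set C : ℝ := ((2 : ℝ) ^ (β + 2) + (3 : ℝ) ^ (β + 1) + 3) / (8 : ℝ) ^ β * ε with hCdef
  have hCnn : 0 ≤ C := by
    apply mul_nonneg _ hε
    apply div_nonneg _ (Real.rpow_nonneg (by norm_num) _)
    have h1 : (0:ℝ) ≤ (2:ℝ) ^ (β+2) := Real.rpow_nonneg (by norm_num) _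
    have h2 : (0:ℝ) ≤ (3:ℝ) ^ (β+1) := Real.rpow_nonneg (by norm_num) _
    linarith
  set c : ℝ := (2 : ℝ) ^ β with hcdef
  have hc1 : 1 < c := by
    rw [hcdef, ← Real.rpow_zero 2]
    exact Real.rpow_lt_rpow_left_iff (by norm_num) |>.mpr hβ
  have hc0 : 0 < c := lt_trans one_pos hc1
  set r : ℝ := c⁻¹ with hrdef
  have hr0 : 0 < r := inv_pos.mpr hc0
  have hr1 : r < 1 := by
    rw [hrdef, inv_lt_one_iff₀]
    right; exact hc1
  -- pow/rpow bridge
  have hpowr : ∀ k : ℕ, (((2:ℝ) ^ k)⁻¹) ^ β = r ^ k := by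
    intro k
    rw [Real.inv_rpow (by positivity)]
    rw [hrdef, inv_pow]
    congr 1
    rw [hcdef, ← Real.rpow_natCast (2:ℝ) k, ← Real.rpow_natCast ((2:ℝ) ^ β) k,
      ← Real.rpow_mul (by norm_num), ← Real.rpow_mul (by norm_num), mul_comm]
  -- key one-step estimate
  have key : ∀ k : ℕ, N (g (k+1) x - g (k+2) x) ≤ (2 * C) * r ^ (k+1) := by
    intro k
    have ha1 : (2 : ℕ) • ((2:ℕ)^k • x) = 2 ^ (k+1) • x := by
      rw [smul_smul]; congr 1; ring
    have ha2 : (4 : ℕ) • ((2:ℕ)^k • x) = 2 ^ (k+2) • x := by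
      rw [smul_smul]; congr 1; ring
    have hE := hf ((2:ℕ)^k • x)
    rw [ha1, ha2] at hE
    have hF := hf (-((2:ℕ)^k • x))
    simp only [smul_neg, neg_neg] at hF
    rw [ha1, ha2] at hF
    set a := f (2 ^ (k+1) • x) with hadef
    set A := f (2 ^ (k+2) • x) with hAdef
    set b := f (-(2 ^ (k+1) • x)) with hbdef
    set B := f (-(2 ^ (k+2) • x)) with hBdef
    set p : ℝ := ((2:ℝ) ^ (k+1) + 1) / (2 * (4:ℝ) ^ (k+1)) with hpdef
    set q : ℝ := ((2:ℝ) ^ (k+1) - 1) / (2 * (4:ℝ) ^ (k+1)) with hqdef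
    have hgd : g (k+1) x - g (k+2) x
        = p • (a - (3/8 : ℝ) • A + (1/8 : ℝ) • B)
          + q • (-(b - (3/8 : ℝ) • B + (1/8 : ℝ) • A)) := by
      rw [hg (k+1) x, hg (k+2) x, ← hadef, ← hAdef, ← hbdef, ← hBdef, hpdef, hqdef]
      match_scalars <;> (field_simp; try ring)
    have h4 : ((4:ℝ)) ^ (k+1) = 2 ^ (k+1) * 2 ^ (k+1) := by
      rw [show (4:ℝ) = 2 * 2 by norm_num, mul_pow]
    have h2pos : (0:ℝ) < (2:ℝ) ^ (k+1) := by positivity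
    have h2ge1 : (1:ℝ) ≤ (2:ℝ) ^ (k+1) := one_le_pow₀ (by norm_num)
    have hp0 : 0 ≤ p := by rw [hpdef]; positivity
    have hq0 : 0 ≤ q := by
      rw [hqdef]
      apply div_nonneg (by linarith) (by positivity)
    have hinv : ((2:ℝ) ^ (k+1))⁻¹ = (2 * 2 ^ (k+1)) / (2 * (4:ℝ) ^ (k+1)) := by
      rw [h4]
      field_simp
    have hple : p ≤ ((2:ℝ) ^ (k+1))⁻¹ := by
      rw [hpdef, hinv]
      gcongr
      linarith
    have hqle : q ≤ ((2:ℝ) ^ (k+1))⁻¹ := by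
      rw [hqdef, hinv]
      gcongr
      linarith
    have hpb : p ^ β ≤ r ^ (k+1) := by
      rw [← hpowr (k+1)]
      exact Real.rpow_le_rpow hp0 hple hβ.le
    have hqb : q ^ β ≤ r ^ (k+1) := by
      rw [← hpowr (k+1)]
      exact Real.rpow_le_rpow hq0 hqle hβ.le
    calc N (g (k+1) x - g (k+2) x)
        ≤ N (p • (a - (3/8 : ℝ) • A + (1/8 : ℝ) • B))
          + N (q • (-(b - (3/8 : ℝ) • B + (1/8 : ℝ) • A))) := by
          rw [hgd]; exact htri _ _
      _ = p ^ β * N (a - (3/8 : ℝ) • A + (1/8 : ℝ) • B)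
          + q ^ β * N (b - (3/8 : ℝ) • B + (1/8 : ℝ) • A) := by
          rw [hhom, hhom, hNneg, abs_of_nonneg hp0, abs_of_nonneg hq0]
      _ ≤ r ^ (k+1) * C + r ^ (k+1) * C := by
          gcongr
          all_goals first | exact hE | exact hF | exact hNnonneg _ | positivity
      _ = (2 * C) * r ^ (k+1) := by ring
  -- step bound for all k ≥ 1
  have step : ∀ k : ℕ, 1 ≤ k → N (g k x - g (k+1) x) ≤ (2 * C) * r ^ k := by
    intro k hk
    obtain ⟨j, rfl⟩ := Nat.exists_eq_add_of_le hk
    simpa [add_comm 1 j] using key j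
  -- telescoping
  have tel : ∀ m n : ℕ, m ≤ n →
      N (g m x - g n x) ≤ ∑ k ∈ Finset.Ico m n, N (g k x - g (k+1) x) := by
    intro m n h
    induction n, h using Nat.le_induction with
    | base => simp [sub_self, hN0']
    | succ n hmn ih =>
      have h1 : g m x - g (n+1) x = (g m x - g n x) + (g n x - g (n+1) x) := by abel
      rw [h1, Finset.sum_Ico_succ_top hmn]
      exact le_trans (htri _ _) (by linarith)
  -- main bound
  set K : ℝ := (2 * C) / (1 - r) + 1 with hKdef
  have hK0 : 0 < K := by
    rw [hKdef]
    have : 0 ≤ (2 * C) / (1 - r) := div_nonneg (by linarith) (by linarith)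
    linarith
  have main : ∀ m n : ℕ, 1 ≤ m → m ≤ n → N (g m x - g n x) ≤ K * r ^ m := by
    intro m n hm hmn
    calc N (g m x - g n x)
        ≤ ∑ k ∈ Finset.Ico m n, N (g k x - g (k+1) x) := tel m n hmn
      _ ≤ ∑ k ∈ Finset.Ico m n, (2 * C) * r ^ k := by
          apply Finset.sum_le_sum
          intro k hk
          exact step k (le_trans hm (Finset.mem_Ico.mp hk).1)
      _ = (2 * C) * ∑ k ∈ Finset.Ico m n, r ^ k := by rw [Finset.mul_sum]
      _ ≤ (2 * C) * (r ^ m / (1 - r)) := by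
          apply mul_le_mul_of_nonneg_left (geom_sum_Ico_le_of_lt_one hr0.le hr1)
          linarith
      _ = ((2 * C) / (1 - r)) * r ^ m := by ring
      _ ≤ K * r ^ m := by
          apply mul_le_mul_of_nonneg_right _ (by positivity)
          rw [hKdef]; linarith
  have cau : ∀ δ > (0:ℝ), ∃ M : ℕ, ∀ m n, M ≤ m → M ≤ n → N (g m x - g n x) < δ := by
    intro δ hδ
    have hrt : Filter.Tendsto (fun n : ℕ => r ^ n) Filter.atTop (nhds 0) :=
      tendsto_pow_atTop_nhds_zero_of_lt_one hr0.le hr1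
    have hpos : (0:ℝ) < δ / K := div_pos hδ hK0
    obtain ⟨M0, hM0⟩ := Filter.eventually_atTop.mp (hrt.eventually (gt_mem_nhds hpos))
    refine ⟨max M0 1, ?_⟩
    have hbound : ∀ m n : ℕ, max M0 1 ≤ m → m ≤ n → N (g m x - g n x) < δ := by
      intro m n hm hmn
      have h1 : 1 ≤ m := le_trans (le_max_right _ _) hm
      have h0 : M0 ≤ m := le_trans (le_max_left _ _) hm
      have := main m n h1 hmn
      have hrm : r ^ m < δ / K := hM0 m h0
      calc N (g m x - g n x) ≤ K * r ^ m := this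
        _ < K * (δ / K) := by exact mul_lt_mul_of_pos_left hrm hK0
        _ = δ := by field_simp
    intro m n hm hn
    rcases le_total m n with h | h
    · exact hbound m n hm h
    · have := hbound n m hn h
      rw [show g m x - g n x = -(g n x - g m x) by abel, hNneg]
      exact this
  exact ⟨cau, hcomp _ cau⟩
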